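/- arXiv:1908.06907 — 4 statements merged into one kernel-verified Lean document; each statement's English description precedes it below -/
import Mathlib

section
/- Let 0 < δ < 1 and 0 < α < β with α/β + α/2 ≤ 1/2. Then β·ln(2/δ) / (α(1+β)ln(1+β) + (β - α - αβ)·ln(1 - αβ/(β-α))) ≤ (β/((1+β)ln(1+β) - β)) · (ln(2/δ)/α). -/
theorem bound_comparison (δ α β : ℝ) (hδ0 : 0 < δ) (hδ1 : δ < 1)
    (hα : 0 < α) (hαβ : α < β) (hcond : α / β + α / 2 ≤ 1 / 2) :
    β * Real.log (2 / δ) /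
      (α * (1 + β) * Real.log (1 + β) +
        (β - α - α * β) * Real.log (1 - α * β / (β - α)))
    ≤ (β / ((1 + β) * Real.log (1 + β) - β)) * (Real.log (2 / δ) / α) := by
  have hβ : 0 < β := hα.trans hαβ
  have hβα : 0 < β - α := sub_pos.2 hαβ
  have h1 : 2 * α + α * β ≤ β := by
    rw [div_add_div _ _ (ne_of_gt hβ) two_ne_zero,
      div_le_div_iff₀ (by positivity) two_pos] at hcond
    nlinarith
  have hden : α ≤ β - α - α * β := by nlinarith
  have hdenpos : 0 < β - α - α * β := lt_of_lt_of_le hα hden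
  have hL : 0 < Real.log (2 / δ) := Real.log_pos (by rw [lt_div_iff₀ hδ0]; linarith)
  have ht : 1 - α * β / (β - α) = (β - α - α * β) / (β - α) := by
    field_simp
  have hpos1 : 0 < (β - α - α * β) / (β - α) := div_pos hdenpos hβα
  have hlog1 : 1 - ((β - α - α * β) / (β - α))⁻¹ ≤ Real.log ((β - α - α * β) / (β - α)) :=
    Real.one_sub_inv_le_log_of_pos hpos1
  have hinv : ((β - α - α * β) / (β - α))⁻¹ = (β - α) / (β - α - α * β) := inv_div _ _
  have hkey : -(α * β) ≤ (β - α - α * β) * Real.log (1 - α * β / (β - α)) := by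
    rw [ht]
    have h2 := mul_le_mul_of_nonneg_left hlog1 hdenpos.le
    rw [hinv] at h2
    calc -(α * β) = (β - α - α * β) * (1 - (β - α) / (β - α - α * β)) := by
          field_simp; ring
      _ ≤ _ := h2
  have hD2 : β < (1 + β) * Real.log (1 + β) := by
    have hy : β / (1 + β) < Real.log (1 + β) := by
      rw [Real.lt_log_iff_exp_lt (by linarith)]
      have hy1 : β / (1 + β) < 1 := by rw [div_lt_one (by linarith)]; linarith
      have ha : 0 < 1 - β / (1 + β) := by linarith
      have h := Real.add_one_lt_exp
        (neg_ne_zero.2 (ne_of_gt (div_pos hβ (by linarith : (0:ℝ) < 1 + β))))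
      have h' : 1 - β / (1 + β) < Real.exp (-(β / (1 + β))) := by linarith
      have h'' : (Real.exp (-(β / (1 + β))))⁻¹ < (1 - β / (1 + β))⁻¹ :=
        (inv_lt_inv₀ (Real.exp_pos _) ha).2 h'
      rw [Real.exp_neg, inv_inv] at h''
      have heq : (1 - β / (1 + β))⁻¹ = 1 + β := by
        rw [show 1 - β / (1 + β) = 1 / (1 + β) by field_simp; ring, one_div, inv_inv]
      rwa [heq] at h''
    calc β = (β / (1 + β)) * (1 + β) := by field_simp
      _ < Real.log (1 + β) * (1 + β) := by
          exact mul_lt_mul_of_pos_right hy (by linarith)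
      _ = (1 + β) * Real.log (1 + β) := mul_comm _ _
  have hD2pos : 0 < (1 + β) * Real.log (1 + β) - β := sub_pos.2 hD2
  have hXge : α * ((1 + β) * Real.log (1 + β) - β) ≤
      α * (1 + β) * Real.log (1 + β) + (β - α - α * β) * Real.log (1 - α * β / (β - α)) := by
    nlinarith [hkey]
  have hrhs : (β / ((1 + β) * Real.log (1 + β) - β)) * (Real.log (2 / δ) / α)
      = β * Real.log (2 / δ) / (α * ((1 + β) * Real.log (1 + β) - β)) := by
    field_simp
  rw [hrhs]
  exact div_le_div_of_nonneg_left (by positivity) (by positivity) hXge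
end

section
/- The function C(β) = β²/((1+β)·ln(1+β) - β) is strictly increasing on (0, ∞). -/
open Real

lemma key_aux : StrictMonoOn (fun x : ℝ => Real.log (1 + x) - 2 * x / (2 + x))
    (Set.Ici (0 : ℝ)) := by
  apply strictMonoOn_of_deriv_pos (convex_Ici 0)
  · apply ContinuousOn.sub
    · apply ContinuousOn.log (by fun_prop)
      intro x hx
      simp only [Set.mem_Ici] at hx
      positivity
    · apply ContinuousOn.div (by fun_prop) (by fun_prop)
      intro x hx
      simp only [Set.mem_Ici] at hx
      positivity
  · intro x hx
    rw [interior_Ici] at hx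
    simp only [Set.mem_Ioi] at hx
    have h1 : (1 : ℝ) + x ≠ 0 := by positivity
    have h2 : (2 : ℝ) + x ≠ 0 := by positivity
    have hd : HasDerivAt (fun x : ℝ => Real.log (1 + x) - 2 * x / (2 + x))
        (1 / (1 + x) - (2 * 1 * (2 + x) - 2 * x * 1) / (2 + x) ^ 2) x := by
      apply HasDerivAt.sub
      · have := ((hasDerivAt_id x).const_add 1).log h1
        simpa using this
      · simpa using ((hasDerivAt_id x).const_mul 2).fun_div ((hasDerivAt_id x).const_add 2) h2
    rw [hd.deriv]
    rw [div_sub_div _ _ h1 (by positivity)]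
    apply div_pos
    · nlinarith [sq_nonneg x]
    · positivity

lemma key {x : ℝ} (hx : 0 < x) : 2 * x / (2 + x) < Real.log (1 + x) := by
  have h := key_aux (Set.self_mem_Ici) (Set.mem_Ici.2 hx.le) hx
  simp only [mul_zero, zero_div, add_zero, Real.log_one, sub_zero] at h
  linarith [h]

lemma denom_pos {x : ℝ} (hx : 0 < x) : 0 < (1 + x) * Real.log (1 + x) - x := by
  have h := key hx
  have h2 : (0:ℝ) < 2 + x := by linarith
  have h3 : x / (1 + x) < 2 * x / (2 + x) := by
    rw [div_lt_div_iff₀ (by linarith) h2]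
    nlinarith
  have h4 : x / (1 + x) < Real.log (1 + x) := lt_trans h3 h
  have := (div_lt_iff₀ (by linarith : (0:ℝ) < 1 + x)).1 h4
  nlinarith

theorem C_strict_mono :
    StrictMonoOn (fun β : ℝ => β ^ 2 / ((1 + β) * Real.log (1 + β) - β))
      (Set.Ioi (0 : ℝ)) := by
  apply strictMonoOn_of_deriv_pos (convex_Ioi 0)
  · apply ContinuousOn.div (by fun_prop)
    · apply ContinuousOn.sub _ (by fun_prop)
      apply ContinuousOn.mul (by fun_prop)
      apply ContinuousOn.log (by fun_prop)
      intro x hx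
      simp only [Set.mem_Ioi] at hx
      positivity
    · intro x hx
      simp only [Set.mem_Ioi] at hx
      exact (denom_pos hx).ne'
  · intro x hx
    rw [interior_Ioi] at hx
    simp only [Set.mem_Ioi] at hx
    have h1 : (1 : ℝ) + x ≠ 0 := by positivity
    have hD := denom_pos hx
    have hnum : HasDerivAt (fun β : ℝ => β ^ 2) (2 * x ^ 1) x := by
      simpa using hasDerivAt_pow 2 x
    have hlog : HasDerivAt (fun β : ℝ => Real.log (1 + β)) (1 / (1 + x)) x := by
      simpa using ((hasDerivAt_id x).const_add 1).log h1
    have hden : HasDerivAt (fun β : ℝ => (1 + β) * Real.log (1 + β) - β)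
        (1 * Real.log (1 + x) + (1 + x) * (1 / (1 + x)) - 1) x := by
      apply HasDerivAt.sub _ (hasDerivAt_id x)
      exact ((hasDerivAt_id x).const_add 1).mul hlog
    have hf := hnum.fun_div hden hD.ne'
    rw [hf.deriv]
    apply div_pos
    · have hk := key hx
      have hlog1 : (1 + x) * (1 / (1 + x)) = 1 := mul_one_div_cancel h1
      rw [hlog1]
      have : (2 + x) * (2 * x / (2 + x)) = 2 * x := by
        field_simp
      nlinarith [mul_lt_mul_of_pos_left hk (by linarith : (0:ℝ) < 2 + x), denom_pos hx]
    · positivity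
end

section
/- Let 0 < δ < 1 and 0 < α < β with α/β + α/2 ≤ 1/2. Let X₁, X₂, … be i.i.d. Bernoulli(p) with p ∈ (0,1), and p̂ₙ = (1/n)·Σᵢ₌₁ⁿ Xᵢ. If n > (β/((1+β)ln(1+β) - β))·ln(2/δ)/α, then Pr{|p̂ₙ - p| < α or |p̂ₙ - p|/p < β} > 1 - δ. -/
open MeasureTheory ProbabilityTheory

lemma deriv_le_aux {f f' : ℝ → ℝ} {a b : ℝ} (hab : a ≤ b)
    (hd : ∀ x ∈ Set.Icc a b, HasDerivAt f (f' x) x)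
    (h0 : ∀ x ∈ Set.Icc a b, 0 ≤ f' x) : f a ≤ f b := by
  have hmono : MonotoneOn f (Set.Icc a b) := by
    apply monotoneOn_of_deriv_nonneg (convex_Icc a b)
    · exact fun x hx => (hd x hx).continuousAt.continuousWithinAt
    · exact fun x hx => ((hd x (interior_subset hx)).differentiableAt).differentiableWithinAt
    · intro x hx
      rw [(hd x (interior_subset hx)).deriv]
      exact h0 x (interior_subset hx)
  exact hmono (Set.left_mem_Icc.2 hab) (Set.right_mem_Icc.2 hab) hab

noncomputable def bH (x : ℝ) : ℝ := (1 + x) * Real.log (1 + x) - x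

lemma bH_hasDerivAt {x : ℝ} (hx : -1 < x) : HasDerivAt bH (Real.log (1 + x)) x := by
  have h1 : (0:ℝ) < 1 + x := by linarith
  have hlog : HasDerivAt (fun y : ℝ => Real.log (1 + y)) ((1 + x)⁻¹) x := by
    have := (Real.hasDerivAt_log (ne_of_gt h1)).comp x ((hasDerivAt_id x).const_add 1)
    exact this.congr_deriv (mul_one _)
  have hmul : HasDerivAt (fun y : ℝ => (1 + y) * Real.log (1 + y))
      (1 * Real.log (1 + x) + (1 + x) * (1 + x)⁻¹) x :=
    ((hasDerivAt_id x).const_add 1).mul hlog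
  have := hmul.sub (hasDerivAt_id x)
  exact this.congr_deriv (by rw [mul_inv_cancel₀ (ne_of_gt h1)]; ring)

lemma bH_zero : bH 0 = 0 := by simp [bH]

lemma bH_pos {x : ℝ} (hx : 0 < x) : 0 < bH x := by
  have h1 : (1:ℝ) < 1 + x := by linarith
  have h2 := Real.log_lt_sub_one_of_pos (x := (1 + x)⁻¹) (by positivity)
    (by rw [ne_eq, inv_eq_one]; linarith)
  rw [Real.log_inv] at h2
  have h3 : 1 - (1 + x)⁻¹ < Real.log (1 + x) := by linarith
  have h4 : (1 + x) * (1 - (1 + x)⁻¹) < (1 + x) * Real.log (1 + x) :=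
    (mul_lt_mul_iff_right₀ (by linarith)).2 h3
  have h5 : (1 + x) * (1 - (1 + x)⁻¹) = x := by field_simp; ring
  unfold bH
  nlinarith

lemma bH_le_sq {x : ℝ} (hx : 0 ≤ x) : bH x ≤ x ^ 2 / 2 := by
  have key : (fun t : ℝ => t ^ 2 / 2 - bH t) 0 ≤ (fun t : ℝ => t ^ 2 / 2 - bH t) x := by
    refine deriv_le_aux (f := fun t : ℝ => t ^ 2 / 2 - bH t) (f' := fun t => t - Real.log (1 + t)) hx ?_ ?_
    · intro t ht
      have ht0 : -1 < t := by have := ht.1; linarith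
      have hpow : HasDerivAt (fun t : ℝ => t ^ 2 / 2) t t := by
        simpa using (hasDerivAt_pow 2 t).div_const 2
      exact hpow.sub (bH_hasDerivAt ht0)
    · intro t ht
      have h1 : (0:ℝ) < 1 + t := by have := ht.1; linarith
      have := Real.log_le_sub_one_of_pos h1
      simp only [add_sub_cancel_left] at this
      linarith
  simp only [bH_zero] at key
  norm_num at key
  linarith

lemma bH_ratio {a b : ℝ} (ha : 0 < a) (hab : a ≤ b) : b * bH a ≤ a * bH b := by
  have key : (fun x : ℝ => bH x / x) a ≤ (fun x : ℝ => bH x / x) b := by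
    refine deriv_le_aux (f := fun x : ℝ => bH x / x)
      (f' := fun x => (Real.log (1 + x) * x - bH x * 1) / x ^ 2) hab ?_ ?_
    · intro x hx
      have hx0 : 0 < x := lt_of_lt_of_le ha hx.1
      exact (bH_hasDerivAt (by linarith)).div (hasDerivAt_id x) (ne_of_gt hx0)
    · intro x hx
      have hx0 : 0 < x := lt_of_lt_of_le ha hx.1
      have hlog : Real.log (1 + x) ≤ x := by
        have := Real.log_le_sub_one_of_pos (show (0:ℝ) < 1 + x by linarith)
        simpa using this
      have hnum : 0 ≤ Real.log (1 + x) * x - bH x * 1 := by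
        unfold bH; nlinarith
      positivity
  simp only at key
  have hb : 0 < b := lt_of_lt_of_le ha hab
  rw [div_le_div_iff₀ ha hb] at key
  linarith

lemma lower_aux {u : ℝ} (h0 : 0 ≤ u) (h1 : u < 1) :
    u ^ 2 / 2 ≤ u + (1 - u) * Real.log (1 - u) := by
  have key : (fun t : ℝ => t + (1 - t) * Real.log (1 - t) - t ^ 2 / 2) 0 ≤
      (fun t : ℝ => t + (1 - t) * Real.log (1 - t) - t ^ 2 / 2) u := by
    refine deriv_le_aux (f := fun t : ℝ => t + (1 - t) * Real.log (1 - t) - t ^ 2 / 2) (f' := fun t => -Real.log (1 - t) - t) h0 ?_ ?_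
    · intro t ht
      have ht1 : (0:ℝ) < 1 - t := by have := ht.2; linarith
      have hlin : HasDerivAt (fun y : ℝ => 1 - y) (-1) t := by
        simpa using (hasDerivAt_id t).const_sub 1
      have hlog : HasDerivAt (fun y : ℝ => Real.log (1 - y)) ((1 - t)⁻¹ * (-1)) t :=
        (Real.hasDerivAt_log (ne_of_gt ht1)).comp t hlin
      have hmul : HasDerivAt (fun y : ℝ => (1 - y) * Real.log (1 - y))
          ((-1) * Real.log (1 - t) + (1 - t) * ((1 - t)⁻¹ * (-1))) t := hlin.mul hlog
      have hpow : HasDerivAt (fun y : ℝ => y ^ 2 / 2) t t := by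
        simpa using (hasDerivAt_pow 2 t).div_const 2
      have := ((hasDerivAt_id t).add hmul).sub hpow
      exact this.congr_deriv (by rw [mul_inv_cancel_left₀ (ne_of_gt ht1)]; ring)
    · intro t ht
      have ht1 : (0:ℝ) < 1 - t := by have := ht.2; linarith
      have := Real.log_le_sub_one_of_pos ht1
      linarith
  simp only [Real.log_one, mul_zero, sub_zero, mul_one] at key
  norm_num at key
  linarith

lemma bern_ae {Ω : Type*} [MeasurableSpace Ω] (μ : Measure Ω) [IsProbabilityMeasure μ]
    (Y : Ω → ℝ) (p : ℝ) (hp0 : 0 ≤ p) (hp1 : p ≤ 1) (hY : Measurable Y)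
    (hone : μ {ω | Y ω = 1} = ENNReal.ofReal p)
    (hzero : μ {ω | Y ω = 0} = ENNReal.ofReal (1 - p)) :
    ∀ᵐ ω ∂μ, Y ω = 0 ∨ Y ω = 1 := by
  have hA : MeasurableSet {ω | Y ω = 0} := hY (measurableSet_singleton 0)
  have hB : MeasurableSet {ω | Y ω = 1} := hY (measurableSet_singleton 1)
  have hdisj : Disjoint {ω | Y ω = 0} {ω | Y ω = 1} := by
    rw [Set.disjoint_left]
    intro ω h0 h1
    simp only [Set.mem_setOf_eq] at h0 h1
    rw [h0] at h1; norm_num at h1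
  have hunion : μ ({ω | Y ω = 0} ∪ {ω | Y ω = 1}) = 1 := by
    rw [measure_union hdisj hB, hzero, hone, ← ENNReal.ofReal_add (by linarith) hp0]
    norm_num
  have hcompl : μ ({ω | Y ω = 0} ∪ {ω | Y ω = 1})ᶜ = 0 := by
    rw [measure_compl (hA.union hB) (measure_ne_top _ _), hunion, measure_univ, tsub_self]
  rw [ae_iff]
  have hset : {a | ¬(Y a = 0 ∨ Y a = 1)} = ({ω | Y ω = 0} ∪ {ω | Y ω = 1})ᶜ := by
    ext ω; simp [not_or]
  rw [hset]
  exact hcompl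

lemma bern_mgf {Ω : Type*} [MeasurableSpace Ω] (μ : Measure Ω) [IsProbabilityMeasure μ]
    (Y : Ω → ℝ) (p : ℝ) (hp0 : 0 ≤ p) (hp1 : p ≤ 1) (hY : Measurable Y)
    (hone : μ {ω | Y ω = 1} = ENNReal.ofReal p)
    (hzero : μ {ω | Y ω = 0} = ENNReal.ofReal (1 - p)) (s : ℝ) :
    mgf Y μ s = 1 + p * (Real.exp s - 1) := by
  have hA : MeasurableSet {ω | Y ω = 0} := hY (measurableSet_singleton 0)
  have hB : MeasurableSet {ω | Y ω = 1} := hY (measurableSet_singleton 1)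
  have hae := bern_ae μ Y p hp0 hp1 hY hone hzero
  have hcong : (fun ω => Real.exp (s * Y ω)) =ᵐ[μ]
      (fun ω => Set.indicator {ω | Y ω = 1} (fun _ => Real.exp s) ω
        + Set.indicator {ω | Y ω = 0} (fun _ => (1:ℝ)) ω) := by
    filter_upwards [hae] with ω h
    rcases h with h | h
    · simp [Set.indicator_apply, Set.mem_setOf_eq, h]
    · simp [Set.indicator_apply, Set.mem_setOf_eq, h]
  rw [mgf, integral_congr_ae hcong, integral_add
      ((integrable_const _).indicator hB) ((integrable_const _).indicator hA),
    integral_indicator_const _ hB, integral_indicator_const _ hA, measureReal_def, measureReal_def, hone, hzero,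
    ENNReal.toReal_ofReal hp0, ENNReal.toReal_ofReal (by linarith)]
  try simp only [smul_eq_mul, mul_one]
  try ring
set_option maxHeartbeats 1000000 in
theorem mixed_criterion_fixed_size' {Ω : Type*} [MeasurableSpace Ω]
    (μ : Measure Ω) [IsProbabilityMeasure μ]
    (X : ℕ → Ω → ℝ) (p : ℝ) (hp0 : 0 < p) (hp1 : p < 1)
    (hmeas : ∀ i, Measurable (X i))
    (hindep : iIndepFun X μ)
    (hone : ∀ i, μ {ω | X i ω = 1} = ENNReal.ofReal p)
    (hzero : ∀ i, μ {ω | X i ω = 0} = ENNReal.ofReal (1 - p))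
    (δ α β : ℝ) (hδ0 : 0 < δ) (hδ1 : δ < 1)
    (hα : 0 < α) (hαβ : α < β)
    (hcond : α / β + α / 2 ≤ 1 / 2)
    (n : ℕ)
    (hn : (n : ℝ) > (β / ((1 + β) * Real.log (1 + β) - β)) * (Real.log (2 / δ) / α)) :
    (μ {ω | |(∑ i ∈ Finset.range n, X i ω) / n - p| < α ∨
            |(∑ i ∈ Finset.range n, X i ω) / n - p| / p < β}).toReal > 1 - δ := by
  classical
  set L := Real.log (2 / δ) with hL
  have hβ0 : 0 < β := lt_trans hα hαβ
  have hbH : 0 < bH β := bH_pos hβ0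
  have hLpos : 0 < L := Real.log_pos (by rw [lt_div_iff₀ hδ0]; linarith)
  rw [show (1 + β) * Real.log (1 + β) - β = bH β from rfl] at hn
  have hnpos : (0:ℝ) < n := lt_trans (by positivity) hn
  have key : L < (n:ℝ) * (α * bH β / β) := by
    have h1 : (β / bH β) * (L / α) * (α * bH β / β) = L := by
      field_simp
    calc L = (β / bH β) * (L / α) * (α * bH β / β) := h1.symm
    _ < (n:ℝ) * (α * bH β / β) :=
        mul_lt_mul_of_pos_right hn (by positivity)
  set t₀ := max α (β * p) with ht₀
  have ht₀α : α ≤ t₀ := le_max_left _ _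
  have ht₀β : β * p ≤ t₀ := le_max_right _ _
  have ht₀pos : 0 < t₀ := lt_of_lt_of_le hα ht₀α
  set u := t₀ / p with hu
  have hupos : 0 < u := div_pos ht₀pos hp0
  have hpu : p * u = t₀ := by rw [hu]; field_simp
  have huβ : β ≤ u := (le_div_iff₀ hp0).2 (by linarith [ht₀β])
  set F := fun ω => ∑ i ∈ Finset.range n, X i ω with hF
  have hFsum : (∑ i ∈ Finset.range n, X i) = F := by
    funext ω; simp [hF]
  have hSmeas : Measurable F := Finset.measurable_sum _ (fun i _ => hmeas i)
  have hFa : ∀ ω, F ω = ∑ i ∈ Finset.range n, X i ω := fun _ => rfl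
  clear_value F u t₀ L
  have haeAll : ∀ᵐ ω ∂μ, ∀ i, X i ω = 0 ∨ X i ω = 1 :=
    ae_all_iff.2 fun i => bern_ae μ (X i) p hp0.le hp1.le (hmeas i) (hone i) (hzero i)
  have hFbound : ∀ᵐ ω ∂μ, 0 ≤ F ω ∧ F ω ≤ n := by
    filter_upwards [haeAll] with ω h
    rw [hFa]
    constructor
    · apply Finset.sum_nonneg; intro i _
      rcases h i with h' | h' <;> rw [h'] <;> norm_num
    · have hle : ∑ i ∈ Finset.range n, X i ω ≤ ∑ _i ∈ Finset.range n, (1:ℝ) := by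
        apply Finset.sum_le_sum
        intro i _
        rcases h i with h' | h' <;> rw [h'] <;> norm_num
      simpa using hle
  have hmgfS : ∀ s : ℝ, mgf F μ s = (1 + p * (Real.exp s - 1)) ^ n := by
    intro s
    rw [← hFsum, hindep.mgf_sum hmeas,
      Finset.prod_congr rfl fun i _ =>
        bern_mgf μ (X i) p hp0.le hp1.le (hmeas i) (hone i) (hzero i) s,
      Finset.prod_const, Finset.card_range]
  have hInt : ∀ s : ℝ, Integrable (fun ω => Real.exp (s * F ω)) μ := by
    intro s
    refine Integrable.mono' (integrable_const (Real.exp (|s| * n)))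
      ((hSmeas.const_mul s).exp).aestronglyMeasurable ?_
    filter_upwards [hFbound] with ω h
    rw [Real.norm_eq_abs, abs_of_pos (Real.exp_pos _)]
    apply Real.exp_le_exp.2
    calc s * F ω ≤ |s * F ω| := le_abs_self _
      _ = |s| * |F ω| := abs_mul _ _
      _ = |s| * F ω := by rw [abs_of_nonneg h.1]
      _ ≤ |s| * n := mul_le_mul_of_nonneg_left h.2 (abs_nonneg s)
  have hexpL : Real.exp (-L) = δ / 2 := by
    rw [Real.exp_neg, hL, Real.exp_log (by positivity)]
    rw [inv_div]
  -- Upper tail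
  have hUp : (μ {ω | (n:ℝ) * (p + t₀) ≤ F ω}).toReal < δ / 2 := by
    set sp := Real.log (1 + u) with hsp
    have h1u : (0:ℝ) < 1 + u := by linarith
    have hsp0 : 0 ≤ sp := Real.log_nonneg (by linarith)
    have hexp : Real.exp sp = 1 + u := Real.exp_log h1u
    have hb := measure_ge_le_exp_mul_mgf (X := F) (μ := μ) ((n:ℝ) * (p + t₀)) hsp0 (hInt sp)
    rw [hmgfS, hexp] at hb
    have hfac : 1 + p * (1 + u - 1) = 1 + t₀ := by
      rw [← hpu]; ring
    rw [hfac] at hb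
    have h1t : (0:ℝ) < 1 + t₀ := by linarith
    rw [show (1 + t₀) ^ n = Real.exp ((n:ℝ) * Real.log (1 + t₀)) by
        rw [Real.exp_nat_mul, Real.exp_log h1t], ← Real.exp_add] at hb
    have hlogt : Real.log (1 + t₀) ≤ t₀ := by
      have := Real.log_le_sub_one_of_pos h1t; linarith
    have hbHu : α * bH β / β ≤ p * bH u := by
      have hr := bH_ratio hβ0 huβ
      have hbHu0 : 0 ≤ bH u := le_of_lt (bH_pos hupos)
      rw [div_le_iff₀ hβ0]
      nlinarith [ht₀α, bH_pos hβ0]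
    have hexparg : -sp * ((n:ℝ) * (p + t₀)) + (n:ℝ) * Real.log (1 + t₀) < -L := by
      have hbu : L < (n:ℝ) * (p * bH u) :=
        lt_of_lt_of_le key (mul_le_mul_of_nonneg_left hbHu hnpos.le)
      have hmain : p * bH u ≤ sp * (p + t₀) - Real.log (1 + t₀) := by
        have : p * bH u = (p + t₀) * sp - p * u := by
          rw [bH, hsp, ← hpu]; ring
        rw [this, hpu]; linarith
      nlinarith [hmain, hnpos]
    calc (μ {ω | (n:ℝ) * (p + t₀) ≤ F ω}).toReal
        ≤ Real.exp (-sp * ((n:ℝ) * (p + t₀)) + (n:ℝ) * Real.log (1 + t₀)) := hb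
      _ < Real.exp (-L) := Real.exp_lt_exp.2 hexparg
      _ = δ / 2 := hexpL
  -- Lower tail
  have hLo : (μ {ω | F ω ≤ (n:ℝ) * (p - t₀)}).toReal < δ / 2 := by
    rcases lt_trichotomy t₀ p with hc | hc | hc
    · -- t₀ < p, u < 1
      have hu1 : u < 1 := by rw [hu]; exact (div_lt_one hp0).2 hc
      set sm := Real.log (1 - u) with hsm
      have h1u : (0:ℝ) < 1 - u := by linarith
      have hs0 : sm ≤ 0 := Real.log_nonpos (by linarith) (by linarith)
      have hexp : Real.exp sm = 1 - u := Real.exp_log h1u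
      have hb := measure_le_le_exp_mul_mgf (X := F) (μ := μ) ((n:ℝ) * (p - t₀)) hs0 (hInt sm)
      rw [hmgfS, hexp] at hb
      have hfac : 1 + p * (1 - u - 1) = 1 - t₀ := by rw [← hpu]; ring
      rw [hfac] at hb
      have h1t : (0:ℝ) < 1 - t₀ := by linarith
      rw [show (1 - t₀) ^ n = Real.exp ((n:ℝ) * Real.log (1 - t₀)) by
          rw [Real.exp_nat_mul, Real.exp_log h1t], ← Real.exp_add] at hb
      have hlogt : Real.log (1 - t₀) ≤ -t₀ := by
        have := Real.log_le_sub_one_of_pos h1t; linarith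
      have hlow := lower_aux hupos.le hu1
      have hsq : α * bH β / β ≤ p * (u ^ 2 / 2) := by
        have h2 : bH β ≤ β ^ 2 / 2 := bH_le_sq hβ0.le
        rw [div_le_iff₀ hβ0]
        have c1 : α * bH β ≤ (p * u) * bH β := by
          have := mul_le_mul_of_nonneg_right ht₀α hbH.le
          rw [← hpu] at this
          exact this
        have c2 : (p * u) * bH β ≤ (p * u) * (β ^ 2 / 2) :=
          mul_le_mul_of_nonneg_left h2 (mul_pos hp0 hupos).le
        have c3 : (p * u) * (β ^ 2 / 2) ≤ (p * u) * (u * β / 2) :=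
          mul_le_mul_of_nonneg_left (by nlinarith [hβ0, huβ]) (mul_pos hp0 hupos).le
        have c4 : (p * u) * (u * β / 2) = p * (u ^ 2 / 2) * β := by ring
        linarith
      have hexparg : -sm * ((n:ℝ) * (p - t₀)) + (n:ℝ) * Real.log (1 - t₀) < -L := by
        have hkey2 : L < (n:ℝ) * (p * (u ^ 2 / 2)) :=
          lt_of_lt_of_le key (mul_le_mul_of_nonneg_left hsq hnpos.le)
        have hstep : Real.log (1 - t₀) - sm * (p - t₀) ≤ -(p * (u ^ 2 / 2)) := by
          have e1 : p - t₀ = p * (1 - u) := by rw [← hpu]; ring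
          calc Real.log (1 - t₀) - sm * (p - t₀)
              ≤ -t₀ - sm * (p - t₀) := by linarith
            _ = -(p * (u + (1 - u) * sm)) := by rw [e1, ← hpu]; ring
            _ ≤ -(p * (u ^ 2 / 2)) := by nlinarith [hlow, hp0]
        nlinarith [hstep, hnpos]
      calc (μ {ω | F ω ≤ (n:ℝ) * (p - t₀)}).toReal
          ≤ Real.exp (-sm * ((n:ℝ) * (p - t₀)) + (n:ℝ) * Real.log (1 - t₀)) := hb
        _ < Real.exp (-L) := Real.exp_lt_exp.2 hexparg
        _ = δ / 2 := hexpL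
    · -- t₀ = p
      have hβ1 : β ≤ 1 := by nlinarith [ht₀β]
      have hαp : α ≤ p := by rw [← hc]; exact ht₀α
      set sm := -Real.log 2 with hsm
      have hs0 : sm ≤ 0 := neg_nonpos.2 (Real.log_nonneg one_le_two)
      have hexp : Real.exp sm = 1 / 2 := by
        rw [hsm, Real.exp_neg, Real.exp_log two_pos]; norm_num
      have hb := measure_le_le_exp_mul_mgf (X := F) (μ := μ) ((n:ℝ) * (p - t₀)) hs0 (hInt sm)
      rw [hmgfS, hexp] at hb
      have hfac : 1 + p * (1 / 2 - 1) = 1 - p / 2 := by ring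
      rw [hfac] at hb
      have hz : -sm * ((n:ℝ) * (p - t₀)) = 0 := by rw [hc]; ring
      rw [hz, Real.exp_zero, one_mul] at hb
      have h1t : (0:ℝ) < 1 - p / 2 := by linarith
      have hlog : Real.log (1 - p / 2) ≤ -(p / 2) := by
        have := Real.log_le_sub_one_of_pos h1t; linarith
      have hkey2 : L < (n:ℝ) * (p / 2) := by
        have h2 : α * bH β / β ≤ p / 2 := by
          have := bH_le_sq hβ0.le
          rw [div_le_iff₀ hβ0]
          nlinarith
        exact lt_of_lt_of_le key (mul_le_mul_of_nonneg_left h2 hnpos.le)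
      calc (μ {ω | F ω ≤ (n:ℝ) * (p - t₀)}).toReal
          ≤ (1 - p / 2) ^ n := hb
        _ = Real.exp ((n:ℝ) * Real.log (1 - p / 2)) := by
            rw [Real.exp_nat_mul, Real.exp_log h1t]
        _ < Real.exp (-L) := Real.exp_lt_exp.2 (by nlinarith [hnpos])
        _ = δ / 2 := hexpL
    · -- t₀ > p : event is null
      have hneg : (n:ℝ) * (p - t₀) < 0 := by nlinarith
      have hnull : μ {ω | F ω ≤ (n:ℝ) * (p - t₀)} = 0 := by
        refine measure_mono_null ?_ (ae_iff.1 hFbound)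
        intro ω hω
        simp only [Set.mem_setOf_eq] at hω ⊢
        intro hc2; linarith [hc2.1]
      rw [hnull]
      simp only [ENNReal.toReal_zero]
      linarith
  -- assembly
  set G := {ω | |F ω / n - p| < α ∨ |F ω / n - p| / p < β} with hG
  have hmeasG : MeasurableSet G := by
    rw [hG, Set.setOf_or]
    exact MeasurableSet.union
      (measurableSet_lt (((hSmeas.div_const _).sub_const p).abs) measurable_const)
      (measurableSet_lt ((((hSmeas.div_const _).sub_const p).abs).div_const p) measurable_const)
  have hsplit : (μ G).toReal = 1 - (μ Gᶜ).toReal := by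
    have h1 : μ G + μ Gᶜ = 1 := by
      rw [measure_add_measure_compl hmeasG, measure_univ]
    have h2 := congrArg ENNReal.toReal h1
    rw [ENNReal.toReal_add (measure_ne_top _ _) (measure_ne_top _ _), ENNReal.toReal_one] at h2
    linarith
  have hsub : Gᶜ ⊆ {ω | (n:ℝ) * (p + t₀) ≤ F ω} ∪ {ω | F ω ≤ (n:ℝ) * (p - t₀)} := by
    intro ω hω
    simp only [hG, Set.mem_compl_iff, Set.mem_setOf_eq, not_or, not_lt] at hω
    obtain ⟨h1, h2⟩ := hω
    have h2' : β * p ≤ |F ω / n - p| := (le_div_iff₀ hp0).1 h2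
    have ht : t₀ ≤ |F ω / n - p| := by rw [ht₀]; exact max_le h1 h2'
    rcases le_abs.1 ht with h | h
    · left
      simp only [Set.mem_setOf_eq]
      have h3 : p + t₀ ≤ F ω / n := by linarith
      have := (le_div_iff₀ hnpos).1 h3
      linarith
    · right
      simp only [Set.mem_setOf_eq]
      have h3 : F ω / n ≤ p - t₀ := by linarith
      have := (div_le_iff₀ hnpos).1 h3
      linarith
  have hcompl_lt : (μ Gᶜ).toReal < δ := by
    have hm : μ Gᶜ ≤ μ {ω | (n:ℝ) * (p + t₀) ≤ F ω} + μ {ω | F ω ≤ (n:ℝ) * (p - t₀)} :=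
      le_trans (measure_mono hsub) (measure_union_le _ _)
    have h3 : (μ Gᶜ).toReal ≤ (μ {ω | (n:ℝ) * (p + t₀) ≤ F ω}).toReal
        + (μ {ω | F ω ≤ (n:ℝ) * (p - t₀)}).toReal := by
      calc (μ Gᶜ).toReal
          ≤ (μ {ω | (n:ℝ) * (p + t₀) ≤ F ω} + μ {ω | F ω ≤ (n:ℝ) * (p - t₀)}).toReal :=
            ENNReal.toReal_mono
              (ENNReal.add_ne_top.2 ⟨measure_ne_top _ _, measure_ne_top _ _⟩) hm
        _ = _ := ENNReal.toReal_add (measure_ne_top _ _) (measure_ne_top _ _)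
    linarith
  have hGeq : {ω | |(∑ i ∈ Finset.range n, X i ω) / n - p| < α ∨
      |(∑ i ∈ Finset.range n, X i ω) / n - p| / p < β} = G := by
    rw [hG]
    ext ω
    simp only [Set.mem_setOf_eq, hFa]
  rw [hGeq, hsplit]
  linarith
end

section
/- Let 0 < δ < 1 and β > 0. Let X₁, X₂, … be i.i.d. Bernoulli(p) with p ∈ (0,1). Define the stopping time N = min{n ∈ ℕ : Σᵢ₌₁ⁿ Xᵢ > (1+β)·ln(2/δ)/((1+β)ln(1+β) - β)} and the estimator p̃ = (1/N)·Σᵢ₌₁ᴺ Xᵢ. Then Pr{|p̃ - p|/p < β} ≥ 1 - δ. -/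
open MeasureTheory ProbabilityTheory Real

section IBSAux
variable {Ω : Type*} [MeasurableSpace Ω] (μ : Measure Ω) [IsProbabilityMeasure μ]

lemma ibs_h_pos {β : ℝ} (h0 : 0 < β) : 0 < (1+β)*Real.log (1+β) - β := by
  have h1 : (0:ℝ) < 1 + β := by linarith
  have h2 := Real.log_lt_sub_one_of_pos (x := 1/(1+β)) (by positivity)
    (by intro h; rw [div_eq_one_iff_eq (ne_of_gt h1)] at h; linarith)
  rw [one_div, Real.log_inv] at h2
  have h3 : (1+β)⁻¹ - 1 = -(β/(1+β)) := by field_simp; ring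
  rw [h3, neg_lt_neg_iff, div_lt_iff₀ h1] at h2
  linarith

lemma ibs_key_log {β : ℝ} (h0 : 0 < β) (h1 : β < 1) :
    Real.log ((1+β)/(1-β)) ≤ 2*β/(1-β^2) := by
  have hb : (0:ℝ) < 1 - β := by linarith
  have hb' : (0:ℝ) < 1 + β := by linarith
  have hx0 : (0:ℝ) < (1+β)/(1-β) := by positivity
  have hx : (1:ℝ) ≤ (1+β)/(1-β) := by rw [le_div_iff₀ hb]; linarith
  have ht : 0 ≤ Real.log ((1+β)/(1-β)) := Real.log_nonneg hx
  have hs := Real.self_le_sinh_iff.mpr ht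
  have heq : Real.sinh (Real.log ((1+β)/(1-β))) = 2*β/(1-β^2) := by
    rw [Real.sinh_eq, Real.exp_neg, Real.exp_log hx0]
    rw [show ((1+β)/(1-β))⁻¹ = (1-β)/(1+β) by rw [inv_div]]
    have : (1:ℝ) - β^2 ≠ 0 := by nlinarith
    field_simp
    ring
  linarith

lemma ibs_ae01 (Y : Ω → ℝ) (hm : Measurable Y) (p : ℝ)
    (h1 : μ {ω | Y ω = 1} = ENNReal.ofReal p)
    (h0 : μ {ω | Y ω = 0} = ENNReal.ofReal (1-p)) (hp0 : 0 ≤ p) (hp1 : p ≤ 1) :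
    ∀ᵐ ω ∂μ, Y ω = 1 ∨ Y ω = 0 := by
  have hA : MeasurableSet {ω | Y ω = 1} := hm (measurableSet_singleton 1)
  have hZ : MeasurableSet {ω | Y ω = 0} := hm (measurableSet_singleton 0)
  have hd : Disjoint {ω | Y ω = 1} {ω | Y ω = 0} := by
    rw [Set.disjoint_left]; intro ω hω1 hω0
    simp only [Set.mem_setOf_eq] at hω1 hω0; rw [hω1] at hω0; norm_num at hω0
  have hU : μ ({ω | Y ω = 1} ∪ {ω | Y ω = 0}) = 1 := by
    rw [measure_union hd hZ, h1, h0, ← ENNReal.ofReal_add hp0 (by linarith)]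
    norm_num
  have h0' : μ ({ω | Y ω = 1} ∪ {ω | Y ω = 0})ᶜ = 0 :=
    (prob_compl_eq_zero_iff (hA.union hZ)).mpr hU
  have hset : {a | ¬ (Y a = 1 ∨ Y a = 0)} = ({ω | Y ω = 1} ∪ {ω | Y ω = 0})ᶜ := by
    ext ω; simp [Set.mem_setOf_eq, not_or]
  rw [ae_iff, hset]; exact h0'

lemma ibs_mgf_bern (Y : Ω → ℝ) (hm : Measurable Y) (p t : ℝ)
    (h1 : μ {ω | Y ω = 1} = ENNReal.ofReal p)
    (h0 : μ {ω | Y ω = 0} = ENNReal.ofReal (1-p)) (hp0 : 0 ≤ p) (hp1 : p ≤ 1) :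
    mgf Y μ t = p * Real.exp t + (1-p) := by
  have hA : MeasurableSet {ω | Y ω = 1} := hm (measurableSet_singleton 1)
  have hZ : MeasurableSet {ω | Y ω = 0} := hm (measurableSet_singleton 0)
  have hae := ibs_ae01 μ Y hm p h1 h0 hp0 hp1
  have hcong : (fun ω => Real.exp (t * Y ω)) =ᵐ[μ]
      (fun ω => Set.indicator {ω | Y ω = 1} (fun _ => Real.exp t) ω
        + Set.indicator {ω | Y ω = 0} (fun _ => (1:ℝ)) ω) := by
    filter_upwards [hae] with ω hω
    rcases hω with h | h
    · rw [Set.indicator_of_mem (by exact h) , Set.indicator_of_notMem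
        (by simp only [Set.mem_setOf_eq, h]; norm_num), h]
      simp
    · rw [Set.indicator_of_notMem (by simp only [Set.mem_setOf_eq, h]; norm_num),
        Set.indicator_of_mem (by exact h), h]
      simp
  have hiA : Integrable (Set.indicator {ω | Y ω = 1} (fun _ => Real.exp t)) μ :=
    (integrable_const _).indicator hA
  have hiZ : Integrable (Set.indicator {ω | Y ω = 0} (fun _ => (1:ℝ))) μ :=
    (integrable_const _).indicator hZ
  rw [mgf, integral_congr_ae hcong, integral_add hiA hiZ,
    integral_indicator_const _ hA, integral_indicator_const _ hZ, measureReal_def, measureReal_def, h1, h0,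
    ENNReal.toReal_ofReal hp0, ENNReal.toReal_ofReal (by linarith)]
  simp only [smul_eq_mul, mul_one]

variable (X : ℕ → Ω → ℝ) (p : ℝ)

lemma ibs_mgf_sum (hmeas : ∀ i, Measurable (X i))
    (hindep : iIndepFun X μ)
    (hone : ∀ i, μ {ω | X i ω = 1} = ENNReal.ofReal p)
    (hzero : ∀ i, μ {ω | X i ω = 0} = ENNReal.ofReal (1 - p))
    (hp0 : 0 ≤ p) (hp1 : p ≤ 1) (n : ℕ) (t : ℝ) :
    mgf (fun ω => ∑ i ∈ Finset.range n, X i ω) μ t = (p * Real.exp t + (1-p))^n := by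
  have h : (fun ω => ∑ i ∈ Finset.range n, X i ω) = ∑ i ∈ Finset.range n, X i := by
    funext ω; rw [Finset.sum_apply]
  rw [h, hindep.mgf_sum hmeas,
    Finset.prod_congr rfl (fun i _ => ibs_mgf_bern μ (X i) (hmeas i) p t (hone i) (hzero i) hp0 hp1),
    Finset.prod_const, Finset.card_range]

lemma ibs_int (hmeas : ∀ i, Measurable (X i))
    (hae : ∀ᵐ ω ∂μ, ∀ i, X i ω = 1 ∨ X i ω = 0) (n : ℕ) (t : ℝ) :
    Integrable (fun ω => Real.exp (t * ∑ i ∈ Finset.range n, X i ω)) μ := by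
  have hSm : Measurable (fun ω => ∑ i ∈ Finset.range n, X i ω) :=
    Finset.measurable_sum _ (fun i _ => hmeas i)
  refine (integrable_const (Real.exp (|t| * n))).mono'
    ((hSm.const_mul t).exp.aestronglyMeasurable) ?_
  filter_upwards [hae] with ω hω
  have h0 : 0 ≤ ∑ i ∈ Finset.range n, X i ω :=
    Finset.sum_nonneg (fun i _ => by rcases hω i with h | h <;> rw [h] <;> norm_num)
  have h1 : ∑ i ∈ Finset.range n, X i ω ≤ n := by
    calc ∑ i ∈ Finset.range n, X i ω ≤ ∑ i ∈ Finset.range n, (1:ℝ) :=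
      Finset.sum_le_sum (fun i _ => by rcases hω i with h | h <;> rw [h] <;> norm_num)
    _ = n := by simp
  rw [Real.norm_eq_abs, Real.abs_exp]
  apply Real.exp_le_exp.mpr
  calc t * ∑ i ∈ Finset.range n, X i ω ≤ |t * ∑ i ∈ Finset.range n, X i ω| := le_abs_self _
  _ = |t| * |∑ i ∈ Finset.range n, X i ω| := abs_mul _ _
  _ = |t| * ∑ i ∈ Finset.range n, X i ω := by rw [abs_of_nonneg h0]
  _ ≤ |t| * n := by apply mul_le_mul_of_nonneg_left h1 (abs_nonneg t)

lemma ibs_chernoff_ge (hmeas : ∀ i, Measurable (X i))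
    (hindep : iIndepFun X μ)
    (hone : ∀ i, μ {ω | X i ω = 1} = ENNReal.ofReal p)
    (hzero : ∀ i, μ {ω | X i ω = 0} = ENNReal.ofReal (1 - p))
    (hp0 : 0 ≤ p) (hp1 : p ≤ 1)
    (hae : ∀ᵐ ω ∂μ, ∀ i, X i ω = 1 ∨ X i ω = 0)
    (n : ℕ) (a t : ℝ) (ht : 0 ≤ t) :
    μ {ω | a ≤ ∑ i ∈ Finset.range n, X i ω}
      ≤ ENNReal.ofReal (Real.exp (-t*a) * (p * Real.exp t + (1-p))^n) := by
  have h := measure_ge_le_exp_mul_mgf (μ := μ) (X := fun ω => ∑ i ∈ Finset.range n, X i ω)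
    a ht (ibs_int μ X hmeas hae n t)
  rw [ibs_mgf_sum μ X p hmeas hindep hone hzero hp0 hp1 n t] at h
  have hbase : 0 ≤ p * Real.exp t + (1-p) := by nlinarith [Real.exp_pos t, Real.exp_pos t]
  have hnn : 0 ≤ Real.exp (-t*a) * (p * Real.exp t + (1-p))^n :=
    mul_nonneg (Real.exp_pos _).le (pow_nonneg hbase n)
  exact (ENNReal.le_ofReal_iff_toReal_le (measure_ne_top μ _) hnn).mpr h

lemma ibs_chernoff_le (hmeas : ∀ i, Measurable (X i))
    (hindep : iIndepFun X μ)
    (hone : ∀ i, μ {ω | X i ω = 1} = ENNReal.ofReal p)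
    (hzero : ∀ i, μ {ω | X i ω = 0} = ENNReal.ofReal (1 - p))
    (hp0 : 0 ≤ p) (hp1 : p ≤ 1)
    (hae : ∀ᵐ ω ∂μ, ∀ i, X i ω = 1 ∨ X i ω = 0)
    (n : ℕ) (a t : ℝ) (ht : t ≤ 0) :
    μ {ω | ∑ i ∈ Finset.range n, X i ω ≤ a}
      ≤ ENNReal.ofReal (Real.exp (-t*a) * (p * Real.exp t + (1-p))^n) := by
  have h := measure_le_le_exp_mul_mgf (μ := μ) (X := fun ω => ∑ i ∈ Finset.range n, X i ω)
    a ht (ibs_int μ X hmeas hae n t)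
  rw [ibs_mgf_sum μ X p hmeas hindep hone hzero hp0 hp1 n t] at h
  have hbase : 0 ≤ p * Real.exp t + (1-p) := by nlinarith [Real.exp_pos t, Real.exp_pos t]
  have hnn : 0 ≤ Real.exp (-t*a) * (p * Real.exp t + (1-p))^n :=
    mul_nonneg (Real.exp_pos _).le (pow_nonneg hbase n)
  exact (ENNReal.le_ofReal_iff_toReal_le (measure_ne_top μ _) hnn).mpr h

end IBSAux

set_option maxHeartbeats 2000000 in
theorem inverse_binomial_sampling {Ω : Type*} [MeasurableSpace Ω]
    (μ : Measure Ω) [IsProbabilityMeasure μ]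
    (X : ℕ → Ω → ℝ) (p : ℝ) (hp0 : 0 < p) (hp1 : p < 1)
    (hmeas : ∀ i, Measurable (X i))
    (hindep : iIndepFun X μ)
    (hone : ∀ i, μ {ω | X i ω = 1} = ENNReal.ofReal p)
    (hzero : ∀ i, μ {ω | X i ω = 0} = ENNReal.ofReal (1 - p))
    (δ β : ℝ) (hδ0 : 0 < δ) (hδ1 : δ < 1) (hβ : 0 < β)
    (N : Ω → ℕ)
    (hN : ∀ ω, N ω = sInf {n : ℕ | 0 < n ∧
      (∑ i ∈ Finset.range n, X i ω) >
        (1 + β) * Real.log (2 / δ) / ((1 + β) * Real.log (1 + β) - β)}) :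
    (μ {ω | |(∑ i ∈ Finset.range (N ω), X i ω) / (N ω) - p| / p < β}).toReal
      ≥ 1 - δ := by
  have hp0' : (0:ℝ) ≤ p := hp0.le
  have hp1' : p ≤ 1 := hp1.le
  have hβ1' : (0:ℝ) < 1 + β := by linarith
  set c : ℝ := (1 + β) * Real.log (2 / δ) / ((1 + β) * Real.log (1 + β) - β) with hcdef
  have hh : 0 < (1+β)*Real.log (1+β) - β := ibs_h_pos hβ
  have hL : 0 < Real.log (2/δ) := Real.log_pos (by rw [lt_div_iff₀ hδ0]; linarith)
  have hc0 : 0 < c := div_pos (by positivity) hh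
  set s : ℕ := Nat.floor c + 1 with hsdef
  have hcs : c < (s:ℝ) := by rw [hsdef]; push_cast; exact Nat.lt_floor_add_one c
  have hsc1 : (s:ℝ) ≤ c + 1 := by rw [hsdef]; push_cast; linarith [Nat.floor_le hc0.le]
  have hs1 : (1:ℝ) ≤ (s:ℝ) := by
    have : 1 ≤ s := by rw [hsdef]; omega
    exact_mod_cast this
  have hae : ∀ᵐ ω ∂μ, ∀ i, X i ω = 1 ∨ X i ω = 0 :=
    ae_all_iff.mpr fun i => ibs_ae01 μ (X i) (hmeas i) p (hone i) (hzero i) hp0' hp1'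
  have hchain : Real.exp (-(c * ((1+β)*Real.log (1+β) - β)/(1+β))) = δ/2 := by
    have : c * ((1+β)*Real.log (1+β) - β)/(1+β) = Real.log (2/δ) := by
      rw [hcdef]; field_simp
    rw [this, Real.exp_neg, Real.exp_log (by positivity), inv_div]
  -- no-success-forever is null
  have hZ2 : μ {ω | ∀ n, ∑ i ∈ Finset.range n, X i ω ≤ c} = 0 := by
    set r : ℝ := p * Real.exp (-1) + (1-p) with hrdef
    have hr0 : 0 ≤ r := by nlinarith [Real.exp_pos (-1:ℝ)]
    have hr1 : r < 1 := by
      have : Real.exp (-1:ℝ) < 1 := by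
        rw [← Real.exp_zero]; exact Real.exp_lt_exp.mpr (by norm_num)
      nlinarith
    have hbound : ∀ m : ℕ, μ {ω | ∀ n, ∑ i ∈ Finset.range n, X i ω ≤ c}
        ≤ ENNReal.ofReal (Real.exp c * r ^ m) := by
      intro m
      have hsub : {ω | ∀ n, ∑ i ∈ Finset.range n, X i ω ≤ c}
          ⊆ {ω | ∑ i ∈ Finset.range m, X i ω ≤ c} := fun ω hω => hω m
      refine (measure_mono hsub).trans ?_
      have h := ibs_chernoff_le μ X p hmeas hindep hone hzero hp0' hp1' hae m c (-1)
        (by norm_num)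
      have he : -(-1:ℝ)*c = c := by ring
      rw [he] at h
      exact h
    have htend : Filter.Tendsto (fun m : ℕ => ENNReal.ofReal (Real.exp c * r ^ m))
        Filter.atTop (nhds 0) := by
      have h := (tendsto_pow_atTop_nhds_zero_of_lt_one hr0 hr1).const_mul (Real.exp c)
      rw [mul_zero] at h
      have h2 := ENNReal.tendsto_ofReal h
      simpa using h2
    exact le_antisymm (ge_of_tendsto' htend hbound) (zero_le)
  -- upper-tail event
  set m₁ : ℕ := Nat.floor ((s:ℝ)/((1+β)*p)) with hm1def
  set A : Set Ω := {ω | (s:ℝ) ≤ ∑ i ∈ Finset.range m₁, X i ω} with hAdef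
  have hAm : MeasurableSet A :=
    measurableSet_le measurable_const (Finset.measurable_sum _ fun i _ => hmeas i)
  have hA : μ A ≤ ENNReal.ofReal (δ/2) := by
    have ht : (0:ℝ) ≤ Real.log (1+β) := Real.log_nonneg (by linarith)
    refine (ibs_chernoff_ge μ X p hmeas hindep hone hzero hp0' hp1' hae m₁ (s:ℝ)
      (Real.log (1+β)) ht).trans (ENNReal.ofReal_le_ofReal ?_)
    rw [Real.exp_log hβ1']
    rw [show p * (1+β) + (1-p) = 1 + β*p by ring]
    have hβp0 : (0:ℝ) ≤ β*p := by positivity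
    have h1 : (1+β*p)^m₁ ≤ Real.exp (β*p*(m₁:ℝ)) := by
      calc (1+β*p)^m₁ ≤ (Real.exp (β*p))^m₁ :=
        pow_le_pow_left₀ (by linarith) (by linarith [Real.add_one_le_exp (β*p)]) m₁
      _ = Real.exp (β*p*(m₁:ℝ)) := by rw [← Real.exp_nat_mul]; ring_nf
    have hm1le : (m₁:ℝ) ≤ (s:ℝ)/((1+β)*p) := Nat.floor_le (by positivity)
    have heq : β*p*((s:ℝ)/((1+β)*p)) = β*(s:ℝ)/(1+β) := by field_simp
    have h2 : β*p*(m₁:ℝ) ≤ β*(s:ℝ)/(1+β) := by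
      calc β*p*(m₁:ℝ) ≤ β*p*((s:ℝ)/((1+β)*p)) := mul_le_mul_of_nonneg_left hm1le hβp0
      _ = β*(s:ℝ)/(1+β) := heq
    calc Real.exp (-Real.log (1+β)*(s:ℝ)) * (1+β*p)^m₁
        ≤ Real.exp (-Real.log (1+β)*(s:ℝ)) * Real.exp (β*p*(m₁:ℝ)) :=
          mul_le_mul_of_nonneg_left h1 (Real.exp_pos _).le
      _ = Real.exp (-Real.log (1+β)*(s:ℝ) + β*p*(m₁:ℝ)) := by rw [← Real.exp_add]
      _ ≤ Real.exp (-(c * ((1+β)*Real.log (1+β) - β)/(1+β))) := by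
          apply Real.exp_le_exp.mpr
          have hkey : -Real.log (1+β)*(s:ℝ) + β*(s:ℝ)/(1+β)
              = -((s:ℝ) * ((1+β)*Real.log (1+β) - β)/(1+β)) := by
            field_simp; ring
          have hmul : c * ((1+β)*Real.log (1+β) - β) ≤ (s:ℝ) * ((1+β)*Real.log (1+β) - β) :=
            mul_le_mul_of_nonneg_right hcs.le hh.le
          have hmon : -((s:ℝ) * ((1+β)*Real.log (1+β) - β)/(1+β))
              ≤ -(c * ((1+β)*Real.log (1+β) - β)/(1+β)) := by
            apply neg_le_neg
            exact (div_le_div_iff_of_pos_right hβ1').mpr hmul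
          linarith
      _ = δ/2 := hchain
  -- lower-tail event
  obtain ⟨B, hBm, hB, hBprop⟩ : ∃ B : Set Ω, MeasurableSet B ∧ μ B ≤ ENNReal.ofReal (δ/2) ∧
      ∀ ω, 0 < N ω →
        (∀ m, m < N ω → ∃ k : ℕ, (∑ i ∈ Finset.range m, X i ω) = (k:ℝ) ∧ (k:ℝ) ≤ c) →
        (s:ℝ)/(N ω : ℝ) ≤ (1-β)*p → ω ∈ B := by
    by_cases hβ1 : β < 1
    · set m₂ : ℕ := Nat.ceil ((s:ℝ)/((1-β)*p)) with hm2def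
      have hb0 : (0:ℝ) < 1 - β := by linarith
      have h1β : (1:ℝ)+β ≠ 0 := ne_of_gt hβ1'
      have hdpos : (0:ℝ) < (s:ℝ)/((1-β)*p) := by positivity
      have hm2ge1 : 1 ≤ m₂ := Nat.one_le_ceil_iff.mpr hdpos
      have hm2cast : ((m₂ - 1 : ℕ):ℝ) = (m₂:ℝ) - 1 := by
        rw [Nat.cast_sub hm2ge1]; norm_num
      refine ⟨{ω | ∑ i ∈ Finset.range (m₂-1), X i ω ≤ (s:ℝ)-1},
        measurableSet_le (Finset.measurable_sum _ fun i _ => hmeas i) measurable_const,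
        ?_, ?_⟩
      · have ht : Real.log (1-β) ≤ 0 := Real.log_nonpos (by linarith) (by linarith)
        refine (ibs_chernoff_le μ X p hmeas hindep hone hzero hp0' hp1' hae (m₂-1) ((s:ℝ)-1)
          (Real.log (1-β)) ht).trans (ENNReal.ofReal_le_ofReal ?_)
        rw [Real.exp_log hb0]
        rw [show p * (1-β) + (1-p) = 1 - β*p by ring]
        have hβp1 : β*p < 1 := by nlinarith
        have hβp0 : (0:ℝ) ≤ β*p := by positivity
        have h1 : (1-β*p)^(m₂-1) ≤ Real.exp (-(β*p)*((m₂-1:ℕ):ℝ)) := by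
          calc (1-β*p)^(m₂-1) ≤ (Real.exp (-(β*p)))^(m₂-1) :=
            pow_le_pow_left₀ (by linarith) (by linarith [Real.add_one_le_exp (-(β*p))]) _
          _ = Real.exp (-(β*p)*((m₂-1:ℕ):ℝ)) := by rw [← Real.exp_nat_mul]; ring_nf
        have hm2le : (s:ℝ)/((1-β)*p) ≤ (m₂:ℝ) := Nat.le_ceil _
        have heq2 : β*p*((s:ℝ)/((1-β)*p)) = β*(s:ℝ)/(1-β) := by field_simp
        have h2 : -(β*p)*((m₂-1:ℕ):ℝ) ≤ -(β*(s:ℝ)/(1-β)) + β*p := by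
          rw [hm2cast]
          have h3 := mul_le_mul_of_nonneg_left hm2le hβp0
          rw [heq2] at h3
          nlinarith
        have hkeylog : Real.log (1+β) - Real.log (1-β) ≤ 2*β/(1-β^2) := by
          have h := ibs_key_log hβ hβ1
          rwa [Real.log_div (by linarith) (by linarith)] at h
        have hglt : -Real.log (1-β) ≤ β/(1-β) := by
          have h := Real.log_lt_sub_one_of_pos (x := 1/(1-β)) (by positivity)
            (by intro hcon; rw [div_eq_one_iff_eq (ne_of_gt hb0)] at hcon; linarith)
          rw [one_div, Real.log_inv] at h
          have he : (1-β)⁻¹ - 1 = β/(1-β) := by field_simp; ring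
          linarith
        have hlb : Real.log (1-β) ≤ -β := by
          have := Real.log_le_sub_one_of_pos hb0; linarith
        have hfrac : β/(1-β) + β/(1+β) = 2*β/(1-β^2) := by
          have hne : (1:ℝ)-β^2 ≠ 0 := by nlinarith
          field_simp
          ring
        have hβp : β*p ≤ β := by nlinarith
        calc Real.exp (-Real.log (1-β)*((s:ℝ)-1)) * (1-β*p)^(m₂-1)
            ≤ Real.exp (-Real.log (1-β)*((s:ℝ)-1)) * Real.exp (-(β*p)*((m₂-1:ℕ):ℝ)) :=
              mul_le_mul_of_nonneg_left h1 (Real.exp_pos _).le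
          _ = Real.exp (-Real.log (1-β)*((s:ℝ)-1) + -(β*p)*((m₂-1:ℕ):ℝ)) := by
              rw [← Real.exp_add]
          _ ≤ Real.exp (-(c * ((1+β)*Real.log (1+β) - β)/(1+β))) := by
              apply Real.exp_le_exp.mpr
              have e1 : -Real.log (1-β)*((s:ℝ)-1) - β*(s:ℝ)/(1-β) + β*p
                  = (s:ℝ)*(-Real.log (1-β) - β/(1-β)) + Real.log (1-β) + β*p := by
                field_simp
                ring
              have e2 : c * ((1+β)*Real.log (1+β) - β)/(1+β)
                  = c*(Real.log (1+β) - β/(1+β)) := by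
                rw [mul_div_assoc]
                congr 1
                field_simp
              have hsG : (s:ℝ)*(-Real.log (1-β) - β/(1-β))
                  ≤ c*(-Real.log (1-β) - β/(1-β)) :=
                mul_le_mul_of_nonpos_right hcs.le (by linarith)
              have hfac : (-Real.log (1-β) - β/(1-β)) + (Real.log (1+β) - β/(1+β)) ≤ 0 := by
                linarith
              have hprod : c*(-Real.log (1-β) - β/(1-β)) + c*(Real.log (1+β) - β/(1+β)) ≤ 0 := by
                nlinarith [hc0.le]
              linarith
          _ = δ/2 := hchain
      · intro ω hN0 hbefore hle
        have hNr : (0:ℝ) < (N ω : ℝ) := by exact_mod_cast hN0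
        have hp1β : (0:ℝ) < (1-β)*p := by
          rcases lt_or_ge 0 ((1-β)*p) with h | h
          · exact h
          · exfalso
            have hd := div_pos (by linarith : (0:ℝ) < (s:ℝ)) hNr
            linarith
        have hsN : (s:ℝ) ≤ (1-β)*p*(N ω : ℝ) := by
          rw [div_le_iff₀ hNr] at hle; linarith
        have hNge : (s:ℝ)/((1-β)*p) ≤ (N ω:ℝ) := by
          rw [div_le_iff₀ hp1β]; linarith
        have hm2leN : m₂ ≤ N ω := Nat.ceil_le.mpr hNge
        have hlt : m₂ - 1 < N ω := by omega
        obtain ⟨k, hk, hkc⟩ := hbefore (m₂-1) hlt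
        have hks : (k:ℝ) ≤ (s:ℝ) - 1 := by
          have hklt : (k:ℝ) < (s:ℝ) := lt_of_le_of_lt hkc hcs
          have hklt' : k < s := by exact_mod_cast hklt
          have : (k:ℝ) + 1 ≤ (s:ℝ) := by exact_mod_cast hklt'
          linarith
        show ∑ i ∈ Finset.range (m₂-1), X i ω ≤ (s:ℝ)-1
        rw [hk]; exact hks
    · refine ⟨∅, MeasurableSet.empty, by simp, ?_⟩
      intro ω hN0 _ hle
      exfalso
      have hNr : (0:ℝ) < (N ω : ℝ) := by exact_mod_cast hN0
      have h1' : (0:ℝ) < (s:ℝ)/(N ω : ℝ) := div_pos (by linarith) hNr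
      have h2' : (1-β)*p ≤ 0 :=
        mul_nonpos_of_nonpos_of_nonneg (by linarith) hp0'
      linarith
  -- null event
  set Z : Set Ω := {ω | ¬ ∀ i, X i ω = 1 ∨ X i ω = 0}
    ∪ {ω | ∀ n, ∑ i ∈ Finset.range n, X i ω ≤ c} with hZdef
  have hZm : MeasurableSet Z := by
    apply MeasurableSet.union
    · have : {ω | ¬ ∀ i, X i ω = 1 ∨ X i ω = 0}
          = (⋂ i, ({ω | X i ω = 1} ∪ {ω | X i ω = 0}))ᶜ := by
        ext ω; simp [Set.mem_setOf_eq, not_or]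
      rw [this]
      exact (MeasurableSet.iInter fun i =>
        ((hmeas i) (measurableSet_singleton 1)).union ((hmeas i) (measurableSet_singleton 0))).compl
    · have : {ω | ∀ n, ∑ i ∈ Finset.range n, X i ω ≤ c}
          = ⋂ n, {ω | ∑ i ∈ Finset.range n, X i ω ≤ c} := by
        ext ω; simp [Set.mem_setOf_eq]
      rw [this]
      exact MeasurableSet.iInter fun n =>
        measurableSet_le (Finset.measurable_sum _ fun i _ => hmeas i) measurable_const
  have hZ0 : μ Z = 0 := by
    apply measure_union_null _ hZ2
    rw [ae_iff] at hae
    exact hae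
  set C : Set Ω := A ∪ B ∪ Z with hCdef
  have hCm : MeasurableSet C := (hAm.union hBm).union hZm
  have hincl : Cᶜ ⊆ {ω | |(∑ i ∈ Finset.range (N ω), X i ω) / (N ω : ℝ) - p| / p < β} := by
    intro ω hω
    have hωA : ω ∉ A := fun h => hω (Or.inl (Or.inl h))
    have hωB : ω ∉ B := fun h => hω (Or.inl (Or.inr h))
    have hωZ1 : ω ∉ {ω | ¬ ∀ i, X i ω = 1 ∨ X i ω = 0} := fun h => hω (Or.inr (Or.inl h))
    have hωZ2 : ω ∉ {ω | ∀ n, ∑ i ∈ Finset.range n, X i ω ≤ c} := fun h =>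
      hω (Or.inr (Or.inr h))
    have h01 : ∀ i, X i ω = 1 ∨ X i ω = 0 := by
      by_contra h; exact hωZ1 h
    have hex : ∃ n, ¬ (∑ i ∈ Finset.range n, X i ω ≤ c) := by
      by_contra h; push_neg at h; exact hωZ2 h
    have hXnn : ∀ i, (0:ℝ) ≤ X i ω := fun i => by
      rcases h01 i with h|h <;> rw [h] <;> norm_num
    have hX1 : ∀ i, X i ω ≤ 1 := fun i => by
      rcases h01 i with h|h <;> rw [h] <;> norm_num
    have hsmono : ∀ a b : ℕ, a ≤ b →
        ∑ i ∈ Finset.range a, X i ω ≤ ∑ i ∈ Finset.range b, X i ω :=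
      fun a b hab => Finset.sum_le_sum_of_subset_of_nonneg (Finset.range_subset_range.mpr hab)
        (fun i _ _ => hXnn i)
    have hne : {n : ℕ | 0 < n ∧ ∑ i ∈ Finset.range n, X i ω > c}.Nonempty := by
      obtain ⟨n, hn⟩ := hex
      push_neg at hn
      refine ⟨n, ?_, hn⟩
      rcases Nat.eq_zero_or_pos n with rfl | h
      · simp at hn; linarith
      · exact h
    have hNmem : 0 < N ω ∧ ∑ i ∈ Finset.range (N ω), X i ω > c := by
      have h := Nat.sInf_mem hne
      rw [← hN ω] at h
      exact h
    obtain ⟨hN0, hNgt⟩ := hNmem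
    have hbefore : ∀ m, m < N ω → ∑ i ∈ Finset.range m, X i ω ≤ c := by
      intro m hm
      by_contra h'
      push_neg at h'
      rcases Nat.eq_zero_or_pos m with rfl | hm0
      · simp at h'; linarith
      · have : N ω ≤ m := by
          rw [hN ω]; exact Nat.sInf_le ⟨hm0, h'⟩
        omega
    have hnatsum : ∀ n, ∃ k : ℕ, ∑ i ∈ Finset.range n, X i ω = (k:ℝ) := by
      intro n
      induction n with
      | zero => exact ⟨0, by simp⟩
      | succ n ih =>
        obtain ⟨k, hk⟩ := ih
        rcases h01 n with h|h
        · exact ⟨k+1, by rw [Finset.sum_range_succ, hk, h]; push_cast; ring⟩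
        · exact ⟨k, by rw [Finset.sum_range_succ, hk, h]; ring⟩
    have hNs : ∑ i ∈ Finset.range (N ω), X i ω = (s:ℝ) := by
      obtain ⟨k, hk⟩ := hnatsum (N ω)
      obtain ⟨m, hm⟩ := Nat.exists_eq_succ_of_ne_zero hN0.ne'
      have hub : ∑ i ∈ Finset.range (N ω), X i ω ≤ c + 1 := by
        rw [hm, Finset.sum_range_succ]
        have h := hbefore m (by omega)
        linarith [hX1 m]
      have hk1 : c < (k:ℝ) := by rw [← hk]; exact hNgt
      have hk2 : (k:ℝ) ≤ c + 1 := by rw [← hk]; exact hub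
      have hks : s ≤ k := by
        have h := (Nat.floor_lt hc0.le).mpr hk1
        omega
      have hks' : k ≤ s := by
        by_contra hcon
        push_neg at hcon
        have h : (s:ℝ) + 1 ≤ (k:ℝ) := by exact_mod_cast hcon
        linarith
      have hkeq : k = s := le_antisymm hks' hks
      rw [hk, hkeq]
    show |(∑ i ∈ Finset.range (N ω), X i ω) / (N ω : ℝ) - p| / p < β
    by_contra hbad
    push_neg at hbad
    rw [hNs, le_div_iff₀ hp0] at hbad
    have hNr : (0:ℝ) < (N ω : ℝ) := by exact_mod_cast hN0
    rcases le_abs.mp hbad with hcase | hcase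
    · have hup : (1+β)*p ≤ (s:ℝ)/(N ω : ℝ) := by linarith
      have h1 : (1+β)*p*(N ω:ℝ) ≤ (s:ℝ) := (le_div_iff₀ hNr).mp hup
      have h2 : (N ω:ℝ) ≤ (s:ℝ)/((1+β)*p) := by
        rw [le_div_iff₀ (by positivity : (0:ℝ) < (1+β)*p)]
        linarith
      have h3 : N ω ≤ m₁ := Nat.le_floor h2
      refine hωA ?_
      show (s:ℝ) ≤ ∑ i ∈ Finset.range m₁, X i ω
      rw [← hNs]
      exact hsmono _ _ h3
    · have hdown : (s:ℝ)/(N ω:ℝ) ≤ (1-β)*p := by linarith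
      refine hωB (hBprop ω hN0 ?_ hdown)
      intro m hm
      obtain ⟨k, hk⟩ := hnatsum m
      exact ⟨k, hk, by rw [← hk]; exact hbefore m hm⟩
  have hC : μ C ≤ ENNReal.ofReal δ := by
    calc μ C ≤ μ (A ∪ B) + μ Z := measure_union_le _ _
    _ = μ (A ∪ B) := by rw [hZ0, add_zero]
    _ ≤ μ A + μ B := measure_union_le _ _
    _ ≤ ENNReal.ofReal (δ/2) + ENNReal.ofReal (δ/2) := add_le_add hA hB
    _ = ENNReal.ofReal δ := by
        rw [← ENNReal.ofReal_add (by linarith) (by linarith)]; norm_num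
  have hcompl : μ Cᶜ = 1 - μ C := prob_compl_eq_one_sub hCm
  have hmono : μ Cᶜ ≤ μ {ω | |(∑ i ∈ Finset.range (N ω), X i ω) / (N ω : ℝ) - p| / p < β} :=
    measure_mono hincl
  have hfin : μ {ω | |(∑ i ∈ Finset.range (N ω), X i ω) / (N ω : ℝ) - p| / p < β} ≠ ⊤ :=
    measure_ne_top μ _
  have h1 : (μ Cᶜ).toReal ≤
      (μ {ω | |(∑ i ∈ Finset.range (N ω), X i ω) / (N ω : ℝ) - p| / p < β}).toReal :=
    ENNReal.toReal_mono hfin hmono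
  have h2 : (μ Cᶜ).toReal = 1 - (μ C).toReal := by
    rw [hcompl, ENNReal.toReal_sub_of_le prob_le_one ENNReal.one_ne_top]
    simp
  have h3 : (μ C).toReal ≤ δ := by
    have := ENNReal.toReal_mono ENNReal.ofReal_ne_top hC
    rwa [ENNReal.toReal_ofReal hδ0.le] at this
  linarith
end
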